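/- Let −1 < β < 0 with β ≠ −1/2. For every polynomial f in four real variables there exists a polynomial q in four real variables such that the function x ↦ q(x)|x|^{4β+4} on ℝ⁴ \ {0} satisfies Δ²(q(x)|x|^{4β+4}) = f(x)|x|^{4β} for all x ≠ 0. -/

import Mathlib

open MeasureTheory Real Filter
open MvPolynomial

/-- The Euclidean Laplacian on `ℝⁿ`: the sum of second partial derivatives. -/
noncomputable def laplacianE {n : ℕ} (f : EuclideanSpace ℝ (Fin n) → ℝ)
    (x : EuclideanSpace ℝ (Fin n)) : ℝ :=
  ∑ i : Fin n, fderiv ℝ (fun y => fderiv ℝ f y (EuclideanSpace.single i 1)) x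
    (EuclideanSpace.single i 1)

noncomputable section
abbrev P4 := MvPolynomial (Fin 4) ℝ
def r2 : P4 := ∑ j, X j ^ 2
def lapP (p : P4) : P4 := ∑ j, pderiv j (pderiv j p)
def eulP (p : P4) : P4 := ∑ j, X j * pderiv j p
def Dpol (e : ℝ) (i : Fin 4) (p : P4) : P4 := pderiv i p * r2 + C (2*e) * (X i * p)
def Lop (e : ℝ) (p : P4) : P4 := r2 * lapP p + C (4*e) * eulP p + C (2*e*(2*e+2)) * p

lemma r2_isHomogeneous : r2.IsHomogeneous 2 := by
  apply IsHomogeneous.sum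
  intro j _
  simpa using (isHomogeneous_X ℝ j).pow 2

lemma r2_ne_zero : r2 ≠ 0 := by
  intro h
  have := congrArg (eval (fun _ => (1:ℝ))) h
  simp [r2] at this

lemma pderiv_r2 (i : Fin 4) : pderiv i r2 = 2 * X i := by
  fin_cases i <;>
  · simp [r2, Fin.sum_univ_four, pderiv_X_self, pderiv_X_of_ne, pow_two, pderiv_mul]
    ring

lemma pderiv_two (i : Fin 4) : pderiv i (2 : P4) = 0 := by
  rw [← map_ofNat (C : ℝ →+* P4) 2, pderiv_C]

lemma lap_r2_mul (v : P4) : lapP (r2 * v) = r2 * lapP v + 4 * eulP v + 8 * v := by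
  simp only [lapP, eulP, pderiv_mul, pderiv_r2, pderiv_two, pderiv_X_self,
    Fin.sum_univ_four, map_add]
  ring

lemma sum_Dpol (e : ℝ) (p : P4) :
    ∑ i, Dpol (e-1) i (Dpol e i p) = r2 * Lop e p := by
  simp only [Dpol, Lop, lapP, eulP, Fin.sum_univ_four, pderiv_mul, pderiv_r2, pderiv_C,
    pderiv_X_self, pderiv_two, map_add, map_mul, map_sub, map_one, map_ofNat]
  simp only [r2, Fin.sum_univ_four]
  ring

lemma degree_fin (m : Fin 4 →₀ ℕ) : m.degree = ∑ j, m j := by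
  rw [Finsupp.degree]
  exact Finset.sum_subset (Finset.subset_univ _) (by intro j _ hj; simpa using hj)

lemma degree_sub_single {m : Fin 4 →₀ ℕ} {i : Fin 4} (h : 0 < m i) :
    (m - Finsupp.single i 1).degree = m.degree - 1 := by
  rw [degree_fin, degree_fin]
  rw [Finset.sum_congr rfl (fun j _ => Finsupp.tsub_apply m (Finsupp.single i 1) j)]
  rw [← Finset.add_sum_erase _ _ (Finset.mem_univ i), ← Finset.add_sum_erase _ m (Finset.mem_univ i)]
  rw [Finset.sum_congr rfl (fun j hj => by
    rw [Finsupp.single_apply, if_neg (by exact fun h' => (Finset.mem_erase.mp hj).1 h'.symm), Nat.sub_zero])]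
  simp only [Finsupp.single_apply, if_pos rfl, if_true]
  generalize (Finset.univ.erase i).sum ⇑m = S
  omega

lemma hom_degree {p : P4} {n : ℕ} (hp : p.IsHomogeneous n) {m : Fin 4 →₀ ℕ}
    (hm : m ∈ p.support) : m.degree = n := by
  rw [Finsupp.degree_eq_weight_one]
  exact hp (mem_support_iff.mp hm)

lemma pderiv_isHomogeneous {p : P4} {n : ℕ} (i : Fin 4) (hp : p.IsHomogeneous n) :
    (pderiv i p).IsHomogeneous (n - 1) := by
  rw [p.as_sum, map_sum]
  apply IsHomogeneous.sum
  intro m hm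
  rw [pderiv_monomial]
  rcases Nat.eq_zero_or_pos (m i) with h | h
  · rw [h]; simpa using isHomogeneous_zero _ _ _
  · exact isHomogeneous_monomial _ (by rw [degree_sub_single h, hom_degree hp hm])

lemma pderiv_of_homog_zero {p : P4} (i : Fin 4) (hp : p.IsHomogeneous 0) :
    pderiv i p = 0 := by
  rw [p.as_sum, map_sum]
  apply Finset.sum_eq_zero
  intro m hm
  have hm0 : m = 0 := (Finsupp.degree_eq_zero_iff m).mp (hom_degree hp hm)
  rw [pderiv_monomial, hm0]
  simp

lemma X_mul_monomial' {j : Fin 4} {d : Fin 4 →₀ ℕ} {a : ℝ} :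
    X j * monomial d a = monomial (d + Finsupp.single j 1) a := by
  rw [X, monomial_mul, one_mul, add_comm]

lemma eul_monomial (m : Fin 4 →₀ ℕ) (c : ℝ) :
    eulP (monomial m c) = monomial m ((m.degree : ℝ) * c) := by
  rw [eulP]
  have key : ∀ j : Fin 4, X j * pderiv j (monomial m c) = monomial m (c * m j) := by
    intro j
    rw [pderiv_monomial]
    rcases Nat.eq_zero_or_pos (m j) with h | h
    · simp [h]
    · rw [X_mul_monomial', tsub_add_cancel_of_le (Finsupp.single_le_iff.mpr h)]
  rw [Finset.sum_congr rfl (fun j _ => key j), ← map_sum (monomial m), ← Finset.mul_sum,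
    degree_fin]
  push_cast
  rw [mul_comm]

lemma eul_homog {p : P4} {n : ℕ} (hp : p.IsHomogeneous n) : eulP p = C (n : ℝ) * p := by
  conv_lhs => rw [p.as_sum]
  conv_rhs => rw [p.as_sum]
  rw [eulP]
  simp_rw [map_sum, Finset.mul_sum]
  rw [Finset.sum_comm]
  apply Finset.sum_congr rfl
  intro m hm
  rw [← eulP, eul_monomial, hom_degree hp hm, C_mul_monomial]

lemma lap_homog {p : P4} {d : ℕ} (hp : p.IsHomogeneous d) :
    (lapP p).IsHomogeneous (d - 2) := by
  apply IsHomogeneous.sum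
  intro i _
  have := pderiv_isHomogeneous i (pderiv_isHomogeneous i hp)
  rwa [Nat.sub_sub] at this

lemma lap_of_homog_le_one {p : P4} {d : ℕ} (hp : p.IsHomogeneous d) (hd : d ≤ 1) :
    lapP p = 0 := by
  apply Finset.sum_eq_zero
  intro i _
  interval_cases d
  · rw [pderiv_of_homog_zero i hp, map_zero]
  · exact pderiv_of_homog_zero i (by simpa using pderiv_isHomogeneous i hp)

lemma eul_isHomogeneous {p : P4} {d : ℕ} (hp : p.IsHomogeneous d) :
    (eulP p).IsHomogeneous d := by
  rw [eul_homog hp]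
  simpa using (isHomogeneous_C _ ((d:ℝ))).mul hp

lemma Lop_isHomogeneous {p : P4} {d : ℕ} (hp : p.IsHomogeneous d) (e : ℝ) :
    (Lop e p).IsHomogeneous d := by
  apply IsHomogeneous.add
  apply IsHomogeneous.add
  · rcases le_or_gt d 1 with hd | hd
    · rw [lap_of_homog_le_one hp hd, mul_zero]
      exact isHomogeneous_zero _ _ _
    · have := r2_isHomogeneous.mul (lap_homog hp)
      rwa [Nat.add_sub_cancel' (by omega : 2 ≤ d)] at this
  · have := (isHomogeneous_C (Fin 4) (4*e)).mul (eul_isHomogeneous hp)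
    rwa [zero_add] at this
  · have := (isHomogeneous_C (Fin 4) (2*e*(2*e+2))).mul hp
    rwa [zero_add] at this

/-- Key injectivity lemma for `r2 * Δ + c`. -/
lemma inj_aux : ∀ d : ℕ, ∀ c : ℝ,
    (∀ j : ℕ, c + 4*(j:ℝ)*((d:ℝ)+1-(j:ℝ)) ≠ 0) →
    ∀ p : P4, p.IsHomogeneous d → r2 * lapP p + C c * p = 0 → p = 0 := by
  intro d
  induction d using Nat.strong_induction_on with
  | _ d IH =>
    intro c hc p hp heq
    have hc0 : c ≠ 0 := by have := hc 0; simpa using this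
    rcases le_or_gt d 1 with hd | hd
    · rw [lap_of_homog_le_one hp hd, mul_zero, zero_add] at heq
      rcases mul_eq_zero.mp heq with h | h
      · exact absurd (by simpa using h) hc0
      · exact h
    · have hd2 : 2 ≤ d := hd
      set v : P4 := C (-c⁻¹) * lapP p with hv
      have hpv : p = r2 * v := by
        have : C c * p = -(r2 * lapP p) := by linear_combination heq
        have h2 : p = C c⁻¹ * (C c * p) := by
          rw [← mul_assoc, ← map_mul, inv_mul_cancel₀ hc0]
          simp
        rw [h2, this, hv, map_neg]
        ring
      have hvhom : v.IsHomogeneous (d - 2) := by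
        simpa using (isHomogeneous_C _ _).mul (lap_homog hp)
      have heul : eulP v = C ((d:ℝ) - 2) * v := by
        rw [eul_homog hvhom]
        congr 2
        push_cast [Nat.cast_sub hd2]
        ring
      have hC : (C (c + 4*(d:ℝ)) : P4) = C c + 4 * C ((d:ℝ) - 2) + 8 := by
        rw [show c + 4*(d:ℝ) = c + 4*((d:ℝ)-2) + 8 by ring, map_add, map_add, map_mul,
          map_ofNat, map_ofNat]
      have heq2 : r2 * (r2 * lapP v + C (c + 4*(d:ℝ)) * v) = 0 := by
        rw [hpv, lap_r2_mul, heul] at heq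
        linear_combination heq + (r2*v) * hC
      have hw : r2 * lapP v + C (c + 4*(d:ℝ)) * v = 0 := by
        rcases mul_eq_zero.mp heq2 with h | h
        · exact absurd h r2_ne_zero
        · exact h
      have hcond : ∀ j : ℕ, (c + 4*(d:ℝ)) + 4*(j:ℝ)*(((d-2 : ℕ):ℝ)+1-(j:ℝ)) ≠ 0 := by
        intro j hEq
        apply hc (j+1)
        push_cast [Nat.cast_sub hd2] at hEq ⊢
        linear_combination hEq
      have hv0 : v = 0 := IH (d-2) (by omega) _ hcond v hvhom hw
      rw [hpv, hv0, mul_zero]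


lemma Lop_homog_form {p : P4} {d : ℕ} (hp : p.IsHomogeneous d) (e : ℝ) :
    Lop e p = r2 * lapP p + C (2*e*(2*(d:ℝ)+2*e+2)) * p := by
  have hC : (C (2*e*(2*(d:ℝ)+2*e+2)) : P4) = C (4*e) * C ((d:ℝ)) + C (2*e*(2*e+2)) := by
    rw [← map_mul, ← map_add]
    congr 1
    ring
  rw [Lop, eul_homog hp]
  linear_combination (-p) * hC

lemma cond_ne {t : ℝ} (h0 : t ≠ 0) (hm : -2 < t) (h4 : t < 4) (h2 : t ≠ 2) (d j : ℕ) :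
    t*(2*(d:ℝ)+t+2) + 4*(j:ℝ)*((d:ℝ)+1-(j:ℝ)) ≠ 0 := by
  rw [show t*(2*(d:ℝ)+t+2) + 4*(j:ℝ)*((d:ℝ)+1-(j:ℝ))
      = (t+2*(j:ℝ))*(t+2*((d:ℝ)-(j:ℝ))+2) by ring]
  apply mul_ne_zero
  · rcases Nat.eq_zero_or_pos j with h | h
    · simpa [h] using h0
    · have h1 : (1:ℝ) ≤ (j:ℝ) := by exact_mod_cast h
      intro hEq
      linarith
  · by_cases hjd : j ≤ d
    · have h1 : (j:ℝ) ≤ (d:ℝ) := by exact_mod_cast hjd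
      intro hEq
      linarith
    · by_cases hj1 : j = d + 1
      · subst hj1
        push_cast
        intro hEq
        exact h0 (by linarith)
      · by_cases hj2 : j = d + 2
        · subst hj2
          push_cast
          intro hEq
          exact h2 (by linarith)
        · have h3 : (d:ℝ) + 3 ≤ (j:ℝ) := by exact_mod_cast (by omega : d + 3 ≤ j)
          intro hEq
          linarith

def LopL (e : ℝ) : P4 →ₗ[ℝ] P4 where
  toFun := Lop e
  map_add' p q := by
    simp only [Lop, lapP, eulP, map_add, Fin.sum_univ_four, mul_add]
    ring
  map_smul' a p := by
    simp only [Lop, lapP, eulP, smul_eq_C_mul, pderiv_C_mul, Fin.sum_univ_four,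
      RingHom.id_apply]
    ring

@[simp] lemma LopL_apply (e : ℝ) (p : P4) : LopL e p = Lop e p := rfl

lemma homog_findim (d : ℕ) : FiniteDimensional ℝ (homogeneousSubmodule (Fin 4) ℝ d) :=
  Submodule.finiteDimensional_of_le (S₂ := restrictTotalDegree (Fin 4) ℝ d) (by
    intro p hp
    rw [mem_restrictTotalDegree]
    exact IsHomogeneous.totalDegree_le hp)

lemma Lop_inj_homog {e : ℝ} {d : ℕ}
    (hc : ∀ j : ℕ, 2*e*(2*(d:ℝ)+2*e+2) + 4*(j:ℝ)*((d:ℝ)+1-(j:ℝ)) ≠ 0)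
    {p : P4} (hp : p.IsHomogeneous d) (h : Lop e p = 0) : p = 0 := by
  refine inj_aux d _ hc p hp ?_
  rw [← Lop_homog_form hp e]
  exact h

lemma Lop2_surj {e₁ e₂ : ℝ}
    (hc₁ : ∀ d j : ℕ, 2*e₁*(2*(d:ℝ)+2*e₁+2) + 4*(j:ℝ)*((d:ℝ)+1-(j:ℝ)) ≠ 0)
    (hc₂ : ∀ d j : ℕ, 2*e₂*(2*(d:ℝ)+2*e₂+2) + 4*(j:ℝ)*((d:ℝ)+1-(j:ℝ)) ≠ 0)
    (f : P4) : ∃ q : P4, Lop e₂ (Lop e₁ q) = f := by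
  have key : ∀ d : ℕ, ∀ g : P4, g.IsHomogeneous d →
      ∃ q : P4, Lop e₂ (Lop e₁ q) = g := by
    intro d g hg
    haveI := homog_findim d
    have hmaps : ∀ p ∈ homogeneousSubmodule (Fin 4) ℝ d,
        ((LopL e₂).comp (LopL e₁)) p ∈ homogeneousSubmodule (Fin 4) ℝ d := by
      intro p hp
      exact Lop_isHomogeneous (Lop_isHomogeneous hp e₁) e₂
    set T := ((LopL e₂).comp (LopL e₁)).restrict hmaps with hT
    have hinj : Function.Injective T := by
      intro a b hab
      apply Subtype.ext
      have hval : Lop e₂ (Lop e₁ (a.1 - b.1)) = 0 := by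
        have h1 : Lop e₂ (Lop e₁ a.1) = Lop e₂ (Lop e₁ b.1) := congrArg Subtype.val hab
        have : (LopL e₂).comp (LopL e₁) (a.1 - b.1) = 0 := by
          rw [map_sub]
          simpa using sub_eq_zero_of_eq h1
        simpa using this
      have hhom : (a.1 - b.1).IsHomogeneous d := a.2.sub b.2
      have := Lop_inj_homog (hc₂ d) (Lop_isHomogeneous hhom e₁) hval
      have := Lop_inj_homog (hc₁ d) hhom this
      exact sub_eq_zero.mp this
    obtain ⟨q, hq⟩ := LinearMap.injective_iff_surjective.mp hinj ⟨g, hg⟩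
    exact ⟨q.1, congrArg Subtype.val hq⟩
  choose Q hQ using fun d => key d (homogeneousComponent d f)
    (homogeneousComponent_isHomogeneous d f)
  refine ⟨∑ i ∈ Finset.range (f.totalDegree + 1), Q i, ?_⟩
  have : Lop e₂ (Lop e₁ (∑ i ∈ Finset.range (f.totalDegree + 1), Q i))
      = ∑ i ∈ Finset.range (f.totalDegree + 1), Lop e₂ (Lop e₁ (Q i)) := by
    rw [show Lop e₁ = ⇑(LopL e₁) from rfl, show Lop e₂ = ⇑(LopL e₂) from rfl,
      map_sum, map_sum]
  rw [this]
  simp_rw [hQ]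
  exact f.sum_homogeneousComponent

abbrev E4 := EuclideanSpace ℝ (Fin 4)

lemma proj_apply (j : Fin 4) (y : E4) : (EuclideanSpace.proj j : E4 →L[ℝ] ℝ) y = y j := rfl

def gradCLM (p : P4) (x : E4) : E4 →L[ℝ] ℝ :=
  ∑ j, MvPolynomial.eval (fun i => x i) (pderiv j p) • (EuclideanSpace.proj j : E4 →L[ℝ] ℝ)

lemma hasFDerivAt_evalP (p : P4) (x : E4) :
    HasFDerivAt (fun y : E4 => MvPolynomial.eval (fun i => y i) p) (gradCLM p x) x := by
  induction p using MvPolynomial.induction_on with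
  | C a =>
    have h0 : gradCLM (C a) x = 0 := by
      unfold gradCLM
      simp
    rw [h0]
    simpa using hasFDerivAt_const a x
  | add p q hp hq =>
    have h0 : gradCLM (p + q) x = gradCLM p x + gradCLM q x := by
      unfold gradCLM
      simp [add_smul, Finset.sum_add_distrib]
    rw [h0]
    have := hp.add hq
    have hf : (fun y : E4 => MvPolynomial.eval (fun k => y k) (p + q))
        = (fun y : E4 => MvPolynomial.eval (fun k => y k) p)
          + (fun y : E4 => MvPolynomial.eval (fun k => y k) q) := by
      funext y
      simp
    rw [hf]
    exact this
  | mul_X p i hp =>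
    have hXi : HasFDerivAt (fun y : E4 => y i) (EuclideanSpace.proj i : E4 →L[ℝ] ℝ) x :=
      (EuclideanSpace.proj i : E4 →L[ℝ] ℝ).hasFDerivAt
    have hmul := hp.mul hXi
    have h0 : gradCLM (p * X i) x
        = MvPolynomial.eval (fun k => x k) p • (EuclideanSpace.proj i : E4 →L[ℝ] ℝ)
          + x i • gradCLM p x := by
      unfold gradCLM
      ext y
      simp only [ContinuousLinearMap.sum_apply, ContinuousLinearMap.smul_apply, proj_apply,
        ContinuousLinearMap.add_apply, smul_eq_mul, pderiv_mul, map_add, map_mul, eval_X,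
        Finset.sum_add_distrib, Finset.mul_sum]
      have : ∀ j : Fin 4, MvPolynomial.eval (fun k => x k) (pderiv j (X i : P4))
          = if j = i then 1 else 0 := by
        intro j
        rcases eq_or_ne j i with h | h
        · subst h; simp [pderiv_X_self]
        · simp [pderiv_X_of_ne h, h]
      rw [Finset.sum_congr rfl (fun j _ => by rw [this j])]
      simp only [add_mul, ite_mul, zero_mul, one_mul, Finset.sum_add_distrib,
        Finset.sum_ite_eq', Finset.mem_univ, if_true]
      simp [mul_comm, mul_left_comm]
      ring
    rw [h0]
    have hf : (fun y : E4 => MvPolynomial.eval (fun k => y k) (p * X i))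
        = (fun y : E4 => MvPolynomial.eval (fun k => y k) p) * (fun y : E4 => y i) := by
      funext y
      simp [eval_X]
    rw [hf]
    exact hmul

def Sfun (y : E4) : ℝ := MvPolynomial.eval (fun i => y i) r2

lemma Sfun_eq (y : E4) : Sfun y = ∑ i, (y i)^2 := by
  simp [Sfun, r2]

lemma Sfun_pos {x : E4} (hx : x ≠ 0) : 0 < Sfun x := by
  obtain ⟨i, hi⟩ : ∃ i, x i ≠ 0 := by
    by_contra h
    push_neg at h
    exact hx (PiLp.ext (fun i => by simpa using h i))
  rw [Sfun_eq]
  exact Finset.sum_pos' (fun j _ => sq_nonneg _) ⟨i, Finset.mem_univ i, by positivity⟩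

lemma hasFDerivAt_main (p : P4) (e : ℝ) {x : E4} (hx : x ≠ 0) :
    HasFDerivAt (fun y : E4 => MvPolynomial.eval (fun i => y i) p * Sfun y ^ e)
      ((Sfun x ^ e) • gradCLM p x
        + (MvPolynomial.eval (fun i => x i) p * (e * Sfun x ^ (e-1))) • gradCLM r2 x) x := by
  have hS : HasFDerivAt Sfun (gradCLM r2 x) x := hasFDerivAt_evalP r2 x
  have hrpow : HasDerivAt (fun t : ℝ => t ^ e) (e * Sfun x ^ (e-1)) (Sfun x) :=
    Real.hasDerivAt_rpow_const (Or.inl (ne_of_gt (Sfun_pos hx)))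
  have hcomp := hrpow.comp_hasFDerivAt x hS
  have hmul := (hasFDerivAt_evalP p x).mul hcomp
  simp only [Function.comp] at hmul
  refine hmul.congr_fderiv ?_
  rw [smul_smul]
  abel

lemma fderiv_single_formula {p : P4} {e : ℝ} {x : E4} (hx : x ≠ 0) (i : Fin 4) :
    fderiv ℝ (fun y : E4 => MvPolynomial.eval (fun k => y k) p * Sfun y ^ e) x
        (EuclideanSpace.single i 1)
      = MvPolynomial.eval (fun k => x k) (Dpol e i p) * Sfun x ^ (e-1) := by
  rw [(hasFDerivAt_main p e hx).fderiv]
  have hproj : ∀ (q : P4), gradCLM q x (EuclideanSpace.single i 1)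
      = MvPolynomial.eval (fun k => x k) (pderiv i q) := by
    intro q
    unfold gradCLM
    simp only [ContinuousLinearMap.sum_apply, ContinuousLinearMap.smul_apply, proj_apply,
      EuclideanSpace.single_apply, smul_eq_mul, mul_ite, mul_one, mul_zero]
    rw [Finset.sum_ite_eq' Finset.univ i
      (fun j => MvPolynomial.eval (fun k => x k) (pderiv j q))]
    simp
  simp only [ContinuousLinearMap.add_apply, ContinuousLinearMap.smul_apply, hproj, smul_eq_mul]
  have hS : Sfun x ^ e = Sfun x ^ (e-1) * Sfun x := by
    rw [show e = (e-1)+1 by ring, Real.rpow_add_one (ne_of_gt (Sfun_pos hx))]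
    ring_nf
  have hr2 : MvPolynomial.eval (fun k => x k) (pderiv i r2) = 2 * x i := by
    rw [pderiv_r2]
    simp
  have hD : MvPolynomial.eval (fun k => x k) (Dpol e i p)
      = MvPolynomial.eval (fun k => x k) (pderiv i p) * Sfun x
        + 2*e * x i * MvPolynomial.eval (fun k => x k) p := by
    simp [Dpol, Sfun]
    ring
  rw [hS, hr2, hD]
  ring

lemma laplacianE_congr {f g : E4 → ℝ} {x : E4} (h : f =ᶠ[nhds x] g) :
    laplacianE f x = laplacianE g x := by
  unfold laplacianE
  apply Finset.sum_congr rfl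
  intro i _
  have hf := h.fderiv (𝕜 := ℝ)
  have h2 : (fun y => fderiv ℝ f y (EuclideanSpace.single i 1))
      =ᶠ[nhds x] (fun y => fderiv ℝ g y (EuclideanSpace.single i 1)) :=
    hf.mono (fun y hy => by simp only []; rw [hy])
  rw [h2.fderiv_eq]

lemma laplacianE_main (p : P4) (e : ℝ) {x : E4} (hx : x ≠ 0) :
    laplacianE (fun y => MvPolynomial.eval (fun i => y i) p * Sfun y ^ e) x
      = MvPolynomial.eval (fun i => x i) (Lop e p) * Sfun x ^ (e - 1) := by
  unfold laplacianE
  have key : ∀ i : Fin 4,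
      fderiv ℝ (fun y => fderiv ℝ
          (fun z => MvPolynomial.eval (fun k => z k) p * Sfun z ^ e) y
          (EuclideanSpace.single i 1)) x (EuclideanSpace.single i 1)
        = MvPolynomial.eval (fun k => x k) (Dpol (e-1) i (Dpol e i p)) * Sfun x ^ (e-2) := by
    intro i
    have hopen : ∀ᶠ y in nhds x, y ≠ (0 : E4) :=
      IsOpen.eventually_mem isOpen_compl_singleton hx
    have hEE : (fun y => fderiv ℝ
          (fun z => MvPolynomial.eval (fun k => z k) p * Sfun z ^ e) y
          (EuclideanSpace.single i 1))
        =ᶠ[nhds x] (fun y => MvPolynomial.eval (fun k => y k) (Dpol e i p) * Sfun y ^ (e-1)) :=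
      hopen.mono (fun y hy => fderiv_single_formula hy i)
    rw [hEE.fderiv_eq, fderiv_single_formula hx i, show e - 1 - 1 = e - 2 by ring]
  rw [Finset.sum_congr rfl (fun i _ => key i), ← Finset.sum_mul]
  have : ∑ i : Fin 4, MvPolynomial.eval (fun k => x k) (Dpol (e-1) i (Dpol e i p))
      = MvPolynomial.eval (fun k => x k) (r2 * Lop e p) := by
    rw [← sum_Dpol e p, map_sum]
  rw [this, eval_mul]
  have hSS : Sfun x * Sfun x ^ (e-2) = Sfun x ^ (e-1) := by
    rw [show e - 1 = (e-2)+1 by ring, Real.rpow_add_one (ne_of_gt (Sfun_pos hx))]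
    ring
  rw [show MvPolynomial.eval (fun k => x k) r2 = Sfun x from rfl]
  rw [← hSS]
  ring

lemma Sfun_norm (y : E4) : Sfun y = ‖y‖ ^ (2:ℕ) := by
  rw [Sfun_eq, EuclideanSpace.norm_eq, Real.sq_sqrt (by positivity)]
  apply Finset.sum_congr rfl
  intro i _
  rw [Real.norm_eq_abs, sq_abs]

lemma norm_rpow_eq (y : E4) (a : ℝ) : ‖y‖ ^ (2*a) = Sfun y ^ a := by
  rw [Sfun_norm, ← Real.rpow_natCast ‖y‖ 2, ← Real.rpow_mul (norm_nonneg y)]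
  norm_num

/-- For `-1 < β < 0`, `β ≠ -1/2`, and any polynomial `f` on `ℝ⁴`, there is a polynomial
`q` with `Δ²(q(x)|x|^{4β+4}) = f(x)|x|^{4β}` away from the origin. -/
theorem exists_polynomial_bilaplacian (β : ℝ) (hβ₁ : -1 < β) (hβ₀ : β < 0)
    (hβ : β ≠ -1/2) (f : MvPolynomial (Fin 4) ℝ) :
    ∃ q : MvPolynomial (Fin 4) ℝ,
      ∀ x : EuclideanSpace ℝ (Fin 4), x ≠ 0 →
        laplacianE (laplacianE
            (fun y => MvPolynomial.eval (fun i => y i) q * ‖y‖ ^ (4 * β + 4))) x =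
          MvPolynomial.eval (fun i => x i) f * ‖x‖ ^ (4 * β) := by
  have hne : (4:ℝ)*β + 4 ≠ 2 := by
    intro h
    apply hβ
    linarith
  have hne2 : (4:ℝ)*β + 2 ≠ 0 := by
    intro h
    apply hβ
    linarith
  have h1 : ∀ d j : ℕ, 2*(2*β+2)*(2*(d:ℝ)+2*(2*β+2)+2) + 4*(j:ℝ)*((d:ℝ)+1-(j:ℝ)) ≠ 0 := by
    intro d j
    have := cond_ne (t := 2*(2*β+2)) (by intro h; linarith) (by linarith) (by linarith)
      (by intro h; apply hne; linarith) d j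
    intro hEq
    apply this
    linarith
  have h2 : ∀ d j : ℕ, 2*(2*β+1)*(2*(d:ℝ)+2*(2*β+1)+2) + 4*(j:ℝ)*((d:ℝ)+1-(j:ℝ)) ≠ 0 := by
    intro d j
    have := cond_ne (t := 2*(2*β+1)) (by intro h; apply hne2; linarith) (by linarith)
      (by linarith) (by intro h; linarith) d j
    intro hEq
    apply this
    linarith
  obtain ⟨q, hq⟩ := Lop2_surj h1 h2 f
  refine ⟨q, fun x hx => ?_⟩
  have hfun : (fun y : E4 => MvPolynomial.eval (fun i => y i) q * ‖y‖ ^ (4*β+4))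
      = fun y : E4 => MvPolynomial.eval (fun i => y i) q * Sfun y ^ (2*β+2) := by
    funext y
    rw [show (4*β+4 : ℝ) = 2*(2*β+2) by ring, norm_rpow_eq]
  rw [hfun]
  have hopen : ∀ᶠ y in nhds x, y ≠ (0 : E4) :=
    IsOpen.eventually_mem isOpen_compl_singleton hx
  have hEE : laplacianE (fun y : E4 => MvPolynomial.eval (fun i => y i) q * Sfun y ^ (2*β+2))
      =ᶠ[nhds x] (fun y : E4 => MvPolynomial.eval (fun i => y i) (Lop (2*β+2) q)
        * Sfun y ^ (2*β+1)) := by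
    apply hopen.mono
    intro y hy
    rw [laplacianE_main q (2*β+2) hy, show (2*β+2) - 1 = 2*β+1 by ring]
  rw [laplacianE_congr hEE, laplacianE_main (Lop (2*β+2) q) (2*β+1) hx,
    show (2*β+1) - 1 = 2*β by ring, show (4*β : ℝ) = 2*(2*β) by ring, norm_rpow_eq, hq]
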